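/- Let (X, 𝒜, μ) be a σ-finite measure space, let k : X → ℝ be measurable, let m < M be real numbers with m ≤ k(x) ≤ M for μ-a.e. x ∈ X, and let g : X → ℝ be μ-integrable. Assume that for every y with m < y < M one has ∫_{{x : k(x) > y}} g dμ > 0 and ∫_{{x : k(x) ≤ y}} g dμ > 0. Then ∫_X g dμ > 0 and there exists a constant k̂ with m < k̂ < M such that ∫_X k(x) g(x) dμ(x) = k̂ ∫_X g(x) dμ(x). -/

import Mathlib

open MeasureTheory Set

/-- Fubini-type auxiliary lemma: if the `t`-slices integrate to `c x * g x`
and every `x`-slice integral of `g` is positive, then `∫ c·g > 0`. -/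
lemma key_pos_aux {X : Type*} [MeasurableSpace X] (μ : Measure X) [SigmaFinite μ]
    (g : X → ℝ) (hg : Integrable g μ) (L : ℝ) (hL : 0 < L)
    (A : Set (X × ℝ)) (hA : MeasurableSet A) (c : X → ℝ)
    (hslice : ∀ᵐ x ∂μ,
      (∫ t in Set.Ioc (0:ℝ) L, ({t : ℝ | (x, t) ∈ A}.indicator (fun _ => g x) t)) = c x * g x)
    (hpos : ∀ t ∈ Set.Ioo (0:ℝ) L, 0 < ∫ x in {x | (x, t) ∈ A}, g x ∂μ) :
    0 < ∫ x, c x * g x ∂μ := by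
  set ν : Measure ℝ := volume.restrict (Set.Ioc 0 L) with hν
  set F : X → ℝ → ℝ := fun x t => A.indicator (fun q : X × ℝ => g q.1) (x, t) with hF
  have hFmeas : AEStronglyMeasurable (Function.uncurry F) (μ.prod ν) := by
    have : Function.uncurry F = A.indicator (fun q : X × ℝ => g q.1) := rfl
    rw [this]
    exact (hg.aestronglyMeasurable.comp_fst).indicator hA
  have hgfst : Integrable (fun p : X × ℝ => g p.1) (μ.prod ν) := by
    have := hg.mul_prod (integrable_const (1:ℝ) (μ := ν))
    simpa using this
  have hFint : Integrable (Function.uncurry F) (μ.prod ν) := by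
    refine hgfst.norm.mono' hFmeas ?_
    refine Filter.Eventually.of_forall fun p => ?_
    exact norm_indicator_le_norm_self (fun q : X × ℝ => g q.1) p
  have hswap := integral_integral_swap hFint
  -- LHS equals ∫ c·g
  have hLHS : (∫ x, ∫ t, F x t ∂ν ∂μ) = ∫ x, c x * g x ∂μ := by
    refine integral_congr_ae ?_
    filter_upwards [hslice] with x hx
    rw [← hx]
    rfl
  -- inner integral on RHS
  have hinner : ∀ t, (∫ x, F x t ∂μ) = ∫ x in {x | (x, t) ∈ A}, g x ∂μ := by
    intro t
    have hset : MeasurableSet {x | (x, t) ∈ A} := measurable_prodMk_right hA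
    rw [← integral_indicator hset]
    rfl
  have hRHS : (∫ t, ∫ x, F x t ∂μ ∂ν) = ∫ t in Set.Ioc (0:ℝ) L, ∫ x in {x | (x, t) ∈ A}, g x ∂μ := by
    simp only [hinner, hν]
  -- positivity of the t-integral
  have hφint : IntegrableOn (fun t => ∫ x in {x | (x, t) ∈ A}, g x ∂μ) (Set.Ioc 0 L) volume := by
    have h := hFint.integral_prod_right
    have h2 : Integrable (fun t => ∫ x in {x | (x, t) ∈ A}, g x ∂μ) ν := by
      refine h.congr (Filter.Eventually.of_forall fun t => ?_)
      exact hinner t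
    exact h2
  have hιι : IntervalIntegrable (fun t => ∫ x in {x | (x, t) ∈ A}, g x ∂μ) volume 0 L := by
    rw [intervalIntegrable_iff, Set.uIoc_of_le hL.le]
    exact hφint
  have hposint : 0 < ∫ t in (0:ℝ)..L, ∫ x in {x | (x, t) ∈ A}, g x ∂μ :=
    intervalIntegral.intervalIntegral_pos_of_pos_on hιι hpos hL
  rw [intervalIntegral.integral_of_le hL.le] at hposint
  calc (0:ℝ) < ∫ t in Set.Ioc (0:ℝ) L, ∫ x in {x | (x, t) ∈ A}, g x ∂μ := hposint
    _ = ∫ x, c x * g x ∂μ := by rw [← hRHS, ← hswap, hLHS]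

theorem mean_value_weight
    {X : Type*} [MeasurableSpace X] (μ : Measure X) [SigmaFinite μ]
    (k : X → ℝ) (hk : Measurable k)
    (m M : ℝ) (hmM : m < M)
    (hbd : ∀ᵐ x ∂μ, m ≤ k x ∧ k x ≤ M)
    (g : X → ℝ) (hg : Integrable g μ)
    (hsuper : ∀ y, m < y → y < M → 0 < ∫ x in {x | k x > y}, g x ∂μ)
    (hsub : ∀ y, m < y → y < M → 0 < ∫ x in {x | k x ≤ y}, g x ∂μ) :
    0 < ∫ x, g x ∂μ ∧
      ∃ khat : ℝ, m < khat ∧ khat < M ∧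
        ∫ x, k x * g x ∂μ = khat * ∫ x, g x ∂μ := by
  have hL : 0 < M - m := sub_pos.2 hmM
  -- positivity of ∫ g
  set y₀ := (m + M) / 2 with hy₀
  have hy₀m : m < y₀ := by simp [hy₀]; linarith
  have hy₀M : y₀ < M := by simp [hy₀]; linarith
  have hs : MeasurableSet {x | k x > y₀} := measurableSet_lt measurable_const hk
  have hsplit : (∫ x in {x | k x > y₀}, g x ∂μ) + ∫ x in {x | k x > y₀}ᶜ, g x ∂μ = ∫ x, g x ∂μ :=
    integral_add_compl hs hg
  have hcompl : {x | k x > y₀}ᶜ = {x | k x ≤ y₀} := by ext x; simp [not_lt]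
  have hI : 0 < ∫ x, g x ∂μ := by
    rw [← hsplit, hcompl]
    exact add_pos (hsuper y₀ hy₀m hy₀M) (hsub y₀ hy₀m hy₀M)
  -- integrability of k * g
  have hkg : Integrable (fun x => k x * g x) μ := by
    refine hg.bdd_mul (c := max ‖m‖ ‖M‖) hk.aestronglyMeasurable ?_
    filter_upwards [hbd] with x ⟨h1, h2⟩
    have hm := neg_abs_le m
    have hM := le_abs_self M
    have h3 := le_max_left |m| |M|
    have h4 := le_max_right |m| |M|
    simp only [Real.norm_eq_abs, abs_le]
    constructor <;> linarith
  -- lower strict inequality via aux lemma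
  have hlow : 0 < ∫ x, (k x - m) * g x ∂μ := by
    refine key_pos_aux μ g hg (M - m) hL {p : X × ℝ | p.2 < k p.1 - m}
      (measurableSet_lt measurable_snd ((hk.comp measurable_fst).sub measurable_const))
      (fun x => k x - m) ?_ ?_
    · filter_upwards [hbd] with x ⟨h1, h2⟩
      show (∫ t in Set.Ioc (0:ℝ) (M - m), (Set.Iio (k x - m)).indicator (fun _ => g x) t) = _
      rw [setIntegral_indicator measurableSet_Iio]
      have : Set.Ioc (0:ℝ) (M - m) ∩ Set.Iio (k x - m) = Set.Ioo 0 (k x - m) := by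
        ext t
        simp only [Set.mem_inter_iff, Set.mem_Ioc, Set.mem_Iio, Set.mem_Ioo]
        constructor
        · rintro ⟨⟨h3, _⟩, h4⟩; exact ⟨h3, h4⟩
        · rintro ⟨h3, h4⟩; exact ⟨⟨h3, le_trans h4.le (by linarith)⟩, h4⟩
      rw [this, setIntegral_const, Real.volume_real_Ioo_of_le (by linarith), smul_eq_mul]
      ring
    · intro t ht
      have hsetA : {x | (x, t) ∈ {p : X × ℝ | p.2 < k p.1 - m}} = {x | k x > m + t} := by
        ext x
        simp only [Set.mem_setOf_eq, gt_iff_lt]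
        constructor <;> intro <;> linarith
      rw [hsetA]
      exact hsuper (m + t) (by linarith [ht.1]) (by linarith [ht.2])
  -- upper strict inequality via aux lemma
  have hhigh : 0 < ∫ x, (M - k x) * g x ∂μ := by
    refine key_pos_aux μ g hg (M - m) hL {p : X × ℝ | k p.1 ≤ M - p.2}
      (measurableSet_le (hk.comp measurable_fst) (measurable_const.sub measurable_snd))
      (fun x => M - k x) ?_ ?_
    · filter_upwards [hbd] with x ⟨h1, h2⟩
      have hsetA : {t : ℝ | k x ≤ M - t} = Set.Iic (M - k x) := by
        ext t
        simp only [Set.mem_setOf_eq, Set.mem_Iic]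
        constructor <;> intro <;> linarith
      rw [hsetA, setIntegral_indicator measurableSet_Iic]
      have : Set.Ioc (0:ℝ) (M - m) ∩ Set.Iic (M - k x) = Set.Ioc 0 (M - k x) := by
        ext t
        simp only [Set.mem_inter_iff, Set.mem_Ioc, Set.mem_Iic]
        constructor
        · rintro ⟨⟨h3, _⟩, h4⟩; exact ⟨h3, h4⟩
        · rintro ⟨h3, h4⟩; exact ⟨⟨h3, le_trans h4 (by linarith)⟩, h4⟩
      rw [this, setIntegral_const, Real.volume_real_Ioc_of_le (by linarith), smul_eq_mul]
      ring
    · intro t ht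
      show 0 < ∫ x in {x | k x ≤ M - t}, g x ∂μ
      exact hsub (M - t) (by linarith [ht.2]) (by linarith [ht.1])
  -- convert to inequalities on ∫ k g
  have e1 : (∫ x, (k x - m) * g x ∂μ) = (∫ x, k x * g x ∂μ) - m * ∫ x, g x ∂μ := by
    have : (fun x => (k x - m) * g x) = fun x => k x * g x - m * g x := by
      funext x; ring
    rw [this, integral_sub hkg (hg.const_mul m), integral_const_mul]
  have e2 : (∫ x, (M - k x) * g x ∂μ) = M * (∫ x, g x ∂μ) - ∫ x, k x * g x ∂μ := by
    have : (fun x => (M - k x) * g x) = fun x => M * g x - k x * g x := by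
      funext x; ring
    rw [this, integral_sub (hg.const_mul M) hkg, integral_const_mul]
  rw [e1] at hlow
  rw [e2] at hhigh
  refine ⟨hI, (∫ x, k x * g x ∂μ) / ∫ x, g x ∂μ, ?_, ?_, ?_⟩
  · rw [lt_div_iff₀ hI]; linarith
  · rw [div_lt_iff₀ hI]; linarith
  · rw [div_mul_cancel₀ _ hI.ne']
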